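/- Let q be an odd prime power, ε = ±1, n ≥ 2, and let z be an element of the center of SL^ε_n(q) whose order is a power of 2. Then z can be written as a product of two squares: z = x^2 y^2 for some x, y ∈ SL^ε_n(q). -/

import Mathlib

/-- The defining condition of the unitary group: `(M^(q))ᵀ * M = 1`, where `M^(q)` raises
every entry of `M` to the `q`-th power. -/
def UnitaryMat {n : ℕ} {K : Type*} [Field K] (q : ℕ) (M : Matrix (Fin n) (Fin n) K) : Prop :=
  (M.map (· ^ q)).transpose * M = 1

/-- The special unitary group `SU_n(q)`, realized as the set of elements of
`SL_n(K)` (where `K` is the field with `q^2` elements) satisfying the unitarity condition. -/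
def suSet (n q : ℕ) (K : Type*) [Field K] : Set (Matrix.SpecialLinearGroup (Fin n) K) :=
  {g | UnitaryMat q (g : Matrix (Fin n) (Fin n) K)}

open Matrix

section TwoByTwo
variable {K : Type*} [Field K]

lemma smul_one_fin_two (c : K) : c • (1 : Matrix (Fin 2) (Fin 2) K) = !![c, 0; 0, c] := by
  rw [one_fin_two, smul_of]
  ext i j
  fin_cases i <;> fin_cases j <;> simp

lemma blk_mul_blk (c d : K) : !![0, 1; c, 0] * !![(0:K), 1; d, 0] = !![d, 0; 0, c] := by
  rw [Matrix.mul_fin_two]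
  norm_num

lemma blk_sq (c : K) : !![0, 1; c, 0] * !![(0:K), 1; c, 0] = c • 1 := by
  rw [blk_mul_blk, smul_one_fin_two]

lemma blk_det (c : K) : (!![0, 1; c, 0] : Matrix (Fin 2) (Fin 2) K).det = -c := by
  simp [Matrix.det_fin_two_of]

lemma blk_map (c : K) (q : ℕ) (hq : q ≠ 0) :
    (!![0, 1; c, 0] : Matrix (Fin 2) (Fin 2) K).map (· ^ q) = !![0, 1; c ^ q, 0] := by
  ext i j
  fin_cases i <;> fin_cases j <;> simp [zero_pow hq]

lemma blk_transpose (c : K) :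
    (!![0, 1; c, 0] : Matrix (Fin 2) (Fin 2) K).transpose = !![0, c; 1, 0] := by
  ext i j
  fin_cases i <;> fin_cases j <;> simp

lemma blk_unitary (c : K) (q : ℕ) (hq : q ≠ 0) (hc : c ^ (q + 1) = 1) :
    UnitaryMat q !![0, 1; c, 0] := by
  unfold UnitaryMat
  rw [blk_map c q hq, blk_transpose, Matrix.mul_fin_two, one_fin_two]
  have h : c ^ q * c = 1 := by rw [← pow_succ]; exact hc
  norm_num [h]

lemma unitary_one {n q : ℕ} (hq : q ≠ 0) : UnitaryMat q (1 : Matrix (Fin n) (Fin n) K) := by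
  unfold UnitaryMat
  rw [Matrix.map_one (· ^ q) (zero_pow hq) (one_pow q), Matrix.transpose_one, one_mul]

end TwoByTwo

section Core
variable {K : Type*} [Field K]

/-- unitarity is preserved by reindexing along an equivalence -/
lemma umat_reindex {I J : Type*} [Fintype I] [DecidableEq I] [Fintype J] [DecidableEq J]
    (e : I ≃ J) (q : ℕ) (M : Matrix I I K)
    (h : (M.map (· ^ q)).transpose * M = 1) :
    (((Matrix.reindex e e M).map (· ^ q)).transpose * Matrix.reindex e e M) = 1 := by
  have h1 : (Matrix.reindex e e M).map (· ^ q) = Matrix.reindex e e (M.map (· ^ q)) := rfl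
  rw [h1, transpose_reindex]
  show ((M.map (· ^ q)).transpose).submatrix e.symm e.symm * M.submatrix e.symm e.symm = 1
  rw [show (e.symm : J → I) = (e.symm : J ≃ I) from rfl, submatrix_mul_equiv, h,
    submatrix_one_equiv]

lemma umat_blockDiagonal {p q : ℕ} (hq : q ≠ 0) (M : Fin p → Matrix (Fin 2) (Fin 2) K)
    (h : ∀ i, ((M i).map (· ^ q)).transpose * M i = 1) :
    (((blockDiagonal M).map (· ^ q)).transpose * blockDiagonal M) = 1 := by
  rw [blockDiagonal_map M (fun x : K => x ^ q) (zero_pow hq), blockDiagonal_transpose, ← blockDiagonal_mul,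
    show (fun i => ((M i).map (· ^ q)).transpose * M i) = fun _ => (1 : Matrix (Fin 2) (Fin 2) K)
      from funext h]
  exact blockDiagonal_one

lemma core {n k : ℕ} (hn : 0 < n) (l : K)
    (hord : orderOf l = 2 ^ (k + 1)) (hdvd : 2 ^ (k + 1) ∣ n) :
    ∃ x y : Matrix (Fin n) (Fin n) K,
      x.det = 1 ∧ y.det = 1 ∧ x * x * (y * y) = l • 1 ∧
      (∀ q : ℕ, Odd q → l ^ (q + 1) = 1 → UnitaryMat q x ∧ UnitaryMat q y) := by
  obtain ⟨m, hm⟩ := hdvd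
  set p := 2 ^ k * m with hpdef
  have hp : n = 2 * p := by rw [hm, hpdef, pow_succ]; ring
  have hp0 : 0 < p := by
    rcases Nat.eq_zero_or_pos p with h | h
    · rw [hp, h] at hn; simp at hn
    · exact h
  have hl1 : l ^ 2 ^ (k + 1) = 1 := by rw [← hord]; exact pow_orderOf_eq_one l
  have hhalf : l ^ 2 ^ k = -1 := by
    have h2 : l ^ 2 ^ k * l ^ 2 ^ k = 1 := by
      rw [← pow_add, show 2 ^ k + 2 ^ k = 2 ^ (k + 1) by rw [pow_succ, mul_two]]
      exact hl1
    rcases mul_self_eq_one_iff.mp h2 with h | h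
    · exact absurd h (pow_ne_one_of_lt_orderOf (by positivity)
        (by rw [hord]; exact Nat.pow_lt_pow_right one_lt_two (Nat.lt_succ_self k)))
    · exact h
  have hlp : l ^ p = (-1) ^ m := by rw [hpdef, pow_mul, hhalf]
  let E : Fin 2 × Fin p ≃ Fin n := finProdFinEquiv.trans (finCongr hp.symm)
  have key : ∀ B C : Fin p → Matrix (Fin 2) (Fin 2) K,
      (∀ i, B i * B i * (C i * C i) = l • 1) →
      (∏ i, (B i).det) = 1 → (∏ i, (C i).det) = 1 →
      (∀ q : ℕ, Odd q → l ^ (q + 1) = 1 →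
        ∀ i, ((B i).map (· ^ q)).transpose * B i = 1 ∧
             ((C i).map (· ^ q)).transpose * C i = 1) →
      ∃ x y : Matrix (Fin n) (Fin n) K,
        x.det = 1 ∧ y.det = 1 ∧ x * x * (y * y) = l • 1 ∧
        (∀ q : ℕ, Odd q → l ^ (q + 1) = 1 → UnitaryMat q x ∧ UnitaryMat q y) := by
    intro B C hBC hdB hdC huni
    refine ⟨reindex E E (blockDiagonal B), reindex E E (blockDiagonal C), ?_, ?_, ?_, ?_⟩
    · rw [det_reindex_self, det_blockDiagonal]; exact hdB
    · rw [det_reindex_self, det_blockDiagonal]; exact hdC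
    · rw [← reindexAlgEquiv_apply K K, ← reindexAlgEquiv_apply K K, ← _root_.map_mul, ← _root_.map_mul,
        ← _root_.map_mul, ← blockDiagonal_mul, ← blockDiagonal_mul, ← blockDiagonal_mul,
        show (fun i => B i * B i * (C i * C i)) =
          fun _ => l • (1 : Matrix (Fin 2) (Fin 2) K) from funext hBC,
        show (fun _ : Fin p => l • (1 : Matrix (Fin 2) (Fin 2) K)) =
          l • (fun _ => (1 : Matrix (Fin 2) (Fin 2) K)) from rfl,
        blockDiagonal_smul,
        show (blockDiagonal fun _ : Fin p => (1 : Matrix (Fin 2) (Fin 2) K)) = 1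
          from blockDiagonal_one, ← Algebra.algebraMap_eq_smul_one,
        AlgEquiv.commutes, Algebra.algebraMap_eq_smul_one]
    · intro q hq hlq
      have hq0 : q ≠ 0 := by rintro rfl; simp [Nat.odd_iff] at hq
      exact ⟨umat_reindex E q _ (umat_blockDiagonal hq0 B fun i => (huni q hq hlq i).1),
        umat_reindex E q _ (umat_blockDiagonal hq0 C fun i => (huni q hq hlq i).2)⟩
  rcases Nat.even_or_odd (p + m) with hpar | hpar
  · -- x has all blocks !![0,1;l,0], y = identity blocks
    refine key (fun _ => !![0, 1; l, 0]) (fun _ => 1) (fun i => ?_) ?_ ?_ ?_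
    · rw [blk_sq, one_mul, mul_one]
    · rw [Finset.prod_const, blk_det, Finset.card_univ, Fintype.card_fin]
      calc (-l) ^ p = (-1) ^ p * l ^ p := by rw [neg_pow]
        _ = (-1) ^ (p + m) := by rw [hlp, ← pow_add]
        _ = 1 := Even.neg_one_pow hpar
    · simp
    · intro q hq hlq i
      have hq0 : q ≠ 0 := by rintro rfl; simp [Nat.odd_iff] at hq
      exact ⟨blk_unitary l q hq0 hlq,
        by rw [Matrix.map_one (· ^ q) (zero_pow hq0) (one_pow q), transpose_one, one_mul]⟩
  · -- odd case: special block at index 0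
    have hpar' : Even (p - 1 + m) := by
      rcases hpar with ⟨t, ht⟩; exact ⟨t, by omega⟩
    let i0 : Fin p := ⟨0, hp0⟩
    refine key (Function.update (fun _ => !![0, 1; l, 0]) i0 !![0, 1; -l, 0])
      (Function.update (fun _ => (1 : Matrix (Fin 2) (Fin 2) K)) i0 !![0, 1; -1, 0])
      (fun i => ?_) ?_ ?_ ?_
    · by_cases h : i = i0
      · subst h
        simp only [Function.update_self]
        rw [blk_sq, blk_sq, smul_mul_smul_comm, one_mul,
          show (-l) * (-1 : K) = l by ring]
      · simp only [Function.update_of_ne h]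
        rw [blk_sq, one_mul, mul_one]
    · rw [show (fun i => ((Function.update (fun _ => !![0, 1; l, 0]) i0 !![0, 1; -l, 0]) i).det)
          = Function.update (fun _ => -l) i0 l from funext fun i => by
            by_cases h : i = i0
            · subst h; simp [blk_det]
            · simp [Function.update_of_ne h, blk_det]]
      rw [Finset.prod_update_of_mem (Finset.mem_univ i0), Finset.prod_const,
        Finset.card_sdiff_of_subset (Finset.subset_univ {i0}), Finset.card_univ, Fintype.card_fin,
        Finset.card_singleton]
      calc l * (-l) ^ (p - 1) = (-1) ^ (p - 1) * (l ^ (p - 1) * l) := by rw [neg_pow]; ring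
        _ = (-1) ^ (p - 1) * l ^ p := by rw [← pow_succ, Nat.sub_add_cancel hp0]
        _ = (-1) ^ (p - 1 + m) := by rw [hlp, ← pow_add]
        _ = 1 := Even.neg_one_pow hpar'
    · refine Finset.prod_eq_one fun i _ => ?_
      by_cases h : i = i0
      · subst h; simp [blk_det]
      · simp [Function.update_of_ne h]
    · intro q hq hlq i
      have hq0 : q ≠ 0 := by rintro rfl; simp [Nat.odd_iff] at hq
      have he : Even (q + 1) := Odd.add_one hq
      by_cases h : i = i0
      · subst h
        simp only [Function.update_self]
        exact ⟨blk_unitary (-l) q hq0 (by rw [Even.neg_pow he, hlq]),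
          blk_unitary (-1) q hq0 (Even.neg_one_pow he)⟩
      · simp only [Function.update_of_ne h]
        exact ⟨blk_unitary l q hq0 hlq,
          by rw [Matrix.map_one (· ^ q) (zero_pow hq0) (one_pow q), transpose_one, one_mul]⟩

end Core

section Group
variable {K : Type*} [Field K] {n : ℕ}

lemma smul_one_eq_one_iff (hn : 0 < n) (c : K) :
    c • (1 : Matrix (Fin n) (Fin n) K) = 1 ↔ c = 1 := by
  constructor
  · intro h
    have := congr_fun (congr_fun h ⟨0, hn⟩) ⟨0, hn⟩
    simpa using this
  · rintro rfl; simp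

lemma sl_pow_iff (hn : 0 < n) (z : Matrix.SpecialLinearGroup (Fin n) K) (r : K)
    (hz : (z : Matrix (Fin n) (Fin n) K) = r • 1) (N : ℕ) : z ^ N = 1 ↔ r ^ N = 1 := by
  constructor
  · intro h
    have h2 : ((z ^ N : Matrix.SpecialLinearGroup (Fin n) K) : Matrix (Fin n) (Fin n) K) = 1 := by
      rw [h, Matrix.SpecialLinearGroup.coe_one]
    rw [Matrix.SpecialLinearGroup.coe_pow, hz, smul_pow, one_pow] at h2
    exact (smul_one_eq_one_iff hn _).mp h2
  · intro h
    apply Subtype.coe_injective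
    show ((z ^ N : Matrix.SpecialLinearGroup (Fin n) K) : Matrix (Fin n) (Fin n) K)
      = ((1 : Matrix.SpecialLinearGroup (Fin n) K) : Matrix (Fin n) (Fin n) K)
    rw [Matrix.SpecialLinearGroup.coe_pow, hz, smul_pow, one_pow, h, one_smul,
      Matrix.SpecialLinearGroup.coe_one]

/-- common final step for both parts -/
lemma finish (hn : 0 < n) (z : Matrix.SpecialLinearGroup (Fin n) K) (r : K)
    (hz : (z : Matrix (Fin n) (Fin n) K) = r • 1) (hord2 : ∃ k, orderOf z = 2 ^ k) :
    ∃ X Y : Matrix.SpecialLinearGroup (Fin n) K, z = X ^ 2 * Y ^ 2 ∧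
      (∀ q : ℕ, Odd q → r ^ (q + 1) = 1 →
        UnitaryMat q (X : Matrix (Fin n) (Fin n) K) ∧
        UnitaryMat q (Y : Matrix (Fin n) (Fin n) K)) := by
  obtain ⟨k, hk⟩ := hord2
  have hor : orderOf r = 2 ^ k := by
    rw [← hk]
    exact (orderOf_eq_orderOf_iff.mpr (sl_pow_iff hn z r hz)).symm
  have hrn : r ^ n = 1 := by
    have h1 : (z : Matrix (Fin n) (Fin n) K).det = 1 := z.prop
    rw [hz, det_smul, det_one, mul_one, Fintype.card_fin] at h1
    exact h1
  rcases k with _ | k'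
  · -- order 1 : z = 1
    have hz1 : z = 1 := orderOf_eq_one_iff.mp (by rw [hk]; norm_num)
    refine ⟨1, 1, by rw [hz1]; group, fun q hq _ => ?_⟩
    have hq0 : q ≠ 0 := by rintro rfl; simp [Nat.odd_iff] at hq
    exact ⟨unitary_one hq0, unitary_one hq0⟩
  · have hdvd : 2 ^ (k' + 1) ∣ n := by
      rw [← hor]
      exact orderOf_dvd_of_pow_eq_one hrn
    obtain ⟨x, y, hdx, hdy, hxy, huni⟩ := core hn r hor hdvd
    refine ⟨⟨x, hdx⟩, ⟨y, hdy⟩, ?_, fun q hq hrq => huni q hq hrq⟩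
    refine (Subtype.coe_injective : Function.Injective
      (fun A : Matrix.SpecialLinearGroup (Fin n) K => (A : Matrix (Fin n) (Fin n) K))) ?_
    show (z : Matrix (Fin n) (Fin n) K) =
      ((⟨x, hdx⟩ ^ 2 * ⟨y, hdy⟩ ^ 2 : Matrix.SpecialLinearGroup (Fin n) K) :
        Matrix (Fin n) (Fin n) K)
    refine hz.trans ?_
    show r • 1 = (x ^ 2) * (y ^ 2)
    rw [pow_two, pow_two, ← hxy, mul_assoc]

end Group

section SU
variable {K : Type*} [Field K] {n q : ℕ}

lemma exists_alpha [Fintype K] (hq3 : 3 ≤ q) (hcard : Fintype.card K = q ^ 2) :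
    ∃ a : K, a ≠ 0 ∧ a ^ (q + 1) = 1 ∧ a ^ 2 ≠ 1 := by
  classical
  have hcardu : Fintype.card Kˣ = q ^ 2 - 1 := by rw [Fintype.card_units, hcard]
  obtain ⟨g, hg⟩ := IsCyclic.exists_generator (α := Kˣ)
  have horder : orderOf g = q ^ 2 - 1 := by
    rw [orderOf_eq_card_of_forall_mem_zpowers hg, Nat.card_eq_fintype_card, hcardu]
  have hfact : q ^ 2 - 1 = (q - 1) * (q + 1) := by
    apply Nat.sub_eq_of_eq_add
    have h1 : 1 ≤ q := by omega
    obtain ⟨Q, rfl⟩ : ∃ Q, q = Q + 1 := ⟨q - 1, by omega⟩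
    rw [Nat.add_sub_cancel]
    ring
  have hdvd : (q - 1) ∣ (q ^ 2 - 1) := ⟨q + 1, hfact⟩
  set a' : Kˣ := g ^ (q - 1) with ha'
  have horda : orderOf a' = q + 1 := by
    rw [ha', orderOf_pow, horder, Nat.gcd_comm, Nat.gcd_eq_left hdvd, hfact,
      Nat.mul_div_cancel_left _ (by omega : 0 < q - 1)]
  refine ⟨(a' : K), Units.ne_zero a', ?_, ?_⟩
  · have : a' ^ (q + 1) = 1 := by rw [← horda]; exact pow_orderOf_eq_one a'
    rw [← Units.val_pow_eq_pow_val, this, Units.val_one]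
  · intro h
    have h2 : a' ^ 2 = 1 := Units.ext (by rw [Units.val_pow_eq_pow_val, h, Units.val_one])
    have h3 : orderOf a' ∣ 2 := orderOf_dvd_of_pow_eq_one h2
    rw [horda] at h3
    have := Nat.le_of_dvd (by norm_num) h3
    omega

lemma su_scalar [Fintype K] (hn : 2 ≤ n) (hq3 : 3 ≤ q) (hqodd : Odd q)
    (hcard : Fintype.card K = q ^ 2)
    (z : Matrix.SpecialLinearGroup (Fin n) K)
    (hz : UnitaryMat q (z : Matrix (Fin n) (Fin n) K))
    (hcomm : ∀ g : Matrix.SpecialLinearGroup (Fin n) K,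
      UnitaryMat q (g : Matrix (Fin n) (Fin n) K) → g * z = z * g) :
    ∃ r : K, (z : Matrix (Fin n) (Fin n) K) = r • 1 ∧ r ^ (q + 1) = 1 := by
  have hn0 : 0 < n := by omega
  have hq0 : q ≠ 0 := by omega
  obtain ⟨a, ha0, haq, ha2⟩ := exists_alpha hq3 hcard
  -- Step 1: off-diagonal entries vanish
  have hoff : ∀ i j : Fin n, i ≠ j → (z : Matrix (Fin n) (Fin n) K) i j = 0 := by
    intro i j hij
    set d : Fin n → K := Function.update (Function.update (fun _ => 1) i a) j a⁻¹ with hd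
    have hdi : d i = a := by
      rw [hd, Function.update_of_ne hij, Function.update_self]
    have hdj : d j = a⁻¹ := by rw [hd, Function.update_self]
    have hd1 : ∀ x, d x ^ (q + 1) = 1 := by
      intro x
      by_cases hxj : x = j
      · rw [hxj, hdj, inv_pow, haq, inv_one]
      · by_cases hxi : x = i
        · rw [hxi, hdi, haq]
        · rw [hd, Function.update_of_ne hxj, Function.update_of_ne hxi, one_pow]
    have hdet : (Matrix.diagonal d).det = 1 := by
      rw [Matrix.det_diagonal, hd, Finset.prod_update_of_mem (Finset.mem_univ j),
        Finset.prod_update_of_mem (by simp [hij] : i ∈ Finset.univ \ {j})]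
      simp [inv_mul_cancel₀ ha0]
    have hunit : UnitaryMat q (Matrix.diagonal d) := by
      unfold UnitaryMat
      have hdm : (Matrix.diagonal d).map (fun x => x ^ q)
          = Matrix.diagonal (fun x => d x ^ q) := Matrix.diagonal_map (by exact zero_pow hq0)
      rw [hdm, Matrix.diagonal_transpose, Matrix.diagonal_mul_diagonal,
        show (fun x => d x ^ q * d x) = fun _ => (1 : K) from
          funext fun x => by rw [← pow_succ, hd1 x]]
      exact Matrix.diagonal_one
    have hDz := hcomm ⟨Matrix.diagonal d, hdet⟩ hunit
    have hmat : Matrix.diagonal d * (z : Matrix (Fin n) (Fin n) K)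
        = (z : Matrix (Fin n) (Fin n) K) * Matrix.diagonal d := by
      have := congrArg (Subtype.val) hDz
      exact this
    have hent := congr_fun (congr_fun hmat i) j
    rw [Matrix.diagonal_mul, Matrix.mul_diagonal, hdi, hdj] at hent
    by_contra hne
    apply ha2
    have h2 : a = a⁻¹ := by
      rw [mul_comm ((z : Matrix (Fin n) (Fin n) K) i j) a⁻¹] at hent
      exact mul_right_cancel₀ hne hent
    rw [sq]
    nth_rewrite 2 [h2]
    exact mul_inv_cancel₀ ha0
  set f : Fin n → K := fun i => (z : Matrix (Fin n) (Fin n) K) i i with hf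
  have hdiag : (z : Matrix (Fin n) (Fin n) K) = Matrix.diagonal f := by
    ext i j
    by_cases h : i = j
    · subst h; simp [hf]
    · rw [Matrix.diagonal_apply_ne _ h]; exact hoff i j h
  -- Step 2: diagonal entries are equal
  have hconst : ∀ i j : Fin n, i ≠ j → f i = f j := by
    intro i j hij
    set σ := Equiv.swap i j with hσ
    set P := σ.permMatrix K with hP
    set e : Fin n → K := Function.update (fun _ => 1) i (-1) with he
    set S := P * Matrix.diagonal e with hS
    have hPab : ∀ a b, P a b = if σ a = b then 1 else 0 := by
      intro a b
      show σ.toPEquiv.toMatrix a b = _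
      rw [PEquiv.toMatrix_toPEquiv_eq, Matrix.submatrix_apply, id_eq, Matrix.one_apply]
    have he1 : ∀ x, e x = 1 ∨ e x = -1 := by
      intro x
      by_cases hx : x = i
      · right; rw [he, hx, Function.update_self]
      · left; rw [he, Function.update_of_ne hx]
    have hSab : ∀ a b, S a b = P a b * e b := fun a b => by
      rw [hS, Matrix.mul_diagonal]
    have hdS : S.det = 1 := by
      rw [hS, Matrix.det_mul, Matrix.det_permutation, Equiv.Perm.sign_swap hij,
        Matrix.det_diagonal, he, Finset.prod_update_of_mem (Finset.mem_univ i)]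
      simp
    have hPTP : P.transpose * P = 1 := by
      show (σ.toPEquiv.toMatrix (α := K))ᵀ * σ.toPEquiv.toMatrix = 1
      rw [← PEquiv.toMatrix_symm, ← Equiv.toPEquiv_symm,
        ← PEquiv.toMatrix_trans, ← Equiv.toPEquiv_trans, Equiv.symm_trans_self,
        Equiv.toPEquiv_refl, PEquiv.toMatrix_refl]
    have hSmap : S.map (fun x => x ^ q) = S := by
      ext a b
      rw [Matrix.map_apply, hSab]
      by_cases h1 : σ a = b
      · rcases he1 b with h2 | h2 <;>
          rw [hPab, if_pos h1, h2, one_mul] <;>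
          [exact one_pow q; exact hqodd.neg_one_pow]
      · rw [hPab, if_neg h1, zero_mul]
        exact zero_pow hq0
    have hunit : UnitaryMat q S := by
      unfold UnitaryMat
      rw [hSmap, hS, Matrix.transpose_mul, Matrix.diagonal_transpose, Matrix.mul_assoc,
        ← Matrix.mul_assoc P.transpose P, hPTP, Matrix.one_mul, Matrix.diagonal_mul_diagonal,
        show (fun x => e x * e x) = fun _ => (1 : K) from funext fun x => by
          rcases he1 x with h | h <;> rw [h] <;> norm_num]
      exact Matrix.diagonal_one
    have hSz := hcomm ⟨S, hdS⟩ hunit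
    have hmat : S * (z : Matrix (Fin n) (Fin n) K)
        = (z : Matrix (Fin n) (Fin n) K) * S := congrArg Subtype.val hSz
    rw [hdiag] at hmat
    have hent := congr_fun (congr_fun hmat i) j
    rw [Matrix.mul_diagonal, Matrix.diagonal_mul] at hent
    have hSij : S i j = 1 := by
      rw [hSab, hPab, if_pos (Equiv.swap_apply_left i j), he,
        Function.update_of_ne (Ne.symm hij), mul_one]
    rw [hSij, one_mul, mul_one] at hent
    exact hent.symm
  -- assemble
  set i0 : Fin n := ⟨0, hn0⟩ with hi0
  have hcall : ∀ a1 : Fin n, f a1 = f i0 := by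
    intro a1
    by_cases h : a1 = i0
    · rw [h]
    · exact hconst _ _ h
  have hzr : (z : Matrix (Fin n) (Fin n) K) = f i0 • 1 := by
    rw [hdiag]
    ext a b
    by_cases h : a = b
    · subst h
      rw [Matrix.diagonal_apply_eq, Matrix.smul_apply, Matrix.one_apply_eq, smul_eq_mul, mul_one]
      exact hcall a
    · rw [Matrix.diagonal_apply_ne _ h, Matrix.smul_apply, Matrix.one_apply_ne h,
        smul_eq_mul, mul_zero]
  refine ⟨f i0, hzr, ?_⟩
  unfold UnitaryMat at hz
  rw [hzr] at hz
  have hmap : ((f i0) • (1 : Matrix (Fin n) (Fin n) K)).map (fun x => x ^ q)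
      = (f i0) ^ q • 1 := by
    ext a b
    by_cases h : a = b
    · subst h
      rw [Matrix.map_apply, Matrix.smul_apply, Matrix.one_apply_eq, smul_eq_mul, mul_one,
        Matrix.smul_apply, Matrix.one_apply_eq, smul_eq_mul, mul_one]
    · rw [Matrix.map_apply, Matrix.smul_apply, Matrix.one_apply_ne h, smul_eq_mul, mul_zero,
        zero_pow hq0, Matrix.smul_apply, Matrix.one_apply_ne h, smul_eq_mul, mul_zero]
  rw [hmap, Matrix.transpose_smul, Matrix.transpose_one, smul_mul_smul_comm, one_mul] at hz
  have := (smul_one_eq_one_iff hn0 _).mp hz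
  rw [← pow_succ] at this
  exact this

end SU

theorem stmt18 (n q : ℕ) (hn : 2 ≤ n) (hq : IsPrimePow q) (hodd : Odd q) :
    -- the case ε = +1: SL_n(q)
    (∀ (F : Type) [Field F] [Fintype F], Fintype.card F = q →
      ∀ z : Matrix.SpecialLinearGroup (Fin n) F,
        z ∈ Subgroup.center (Matrix.SpecialLinearGroup (Fin n) F) →
        (∃ k : ℕ, orderOf z = 2 ^ k) →
        ∃ x y : Matrix.SpecialLinearGroup (Fin n) F, z = x ^ 2 * y ^ 2) ∧
    -- the case ε = -1: SU_n(q) ⊆ SL_n(q^2)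
    (∀ (K : Type) [Field K] [Fintype K], Fintype.card K = q ^ 2 →
      ∀ z : Matrix.SpecialLinearGroup (Fin n) K, z ∈ suSet n q K →
        (∀ g ∈ suSet n q K, g * z = z * g) →
        (∃ k : ℕ, orderOf z = 2 ^ k) →
        ∃ x ∈ suSet n q K, ∃ y ∈ suSet n q K, z = x ^ 2 * y ^ 2) := by
  have hn0 : 0 < n := by omega
  have hq3 : 3 ≤ q := by
    have h2 := hq.two_le
    rcases hodd with ⟨t, ht⟩
    omega
  constructor
  · intro F _ _ hcard z hz hord
    obtain ⟨r, hrn, hsc⟩ := Matrix.SpecialLinearGroup.mem_center_iff.mp hz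
    have hzr : (z : Matrix (Fin n) (Fin n) F) = r • 1 := by
      rw [← hsc, Matrix.scalar_apply, Matrix.smul_one_eq_diagonal]
    obtain ⟨X, Y, hXY, _⟩ := finish hn0 z r hzr hord
    exact ⟨X, Y, hXY⟩
  · intro K _ _ hcard z hzsu hcomm hord
    obtain ⟨r, hzr, hrq⟩ := su_scalar hn hq3 hodd hcard z hzsu (fun g hg => hcomm g hg)
    obtain ⟨X, Y, hXY, huni⟩ := finish hn0 z r hzr hord
    obtain ⟨hX, hY⟩ := huni q hodd hrq
    exact ⟨X, hX, Y, hY, hXY⟩
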